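/- Fix an integer k ≥ 1 and let n ≥ 0. Let S = (v_k, …, v_i, …, v_1) ∈ A_n and let S' = (v_k, …, ε·v_i, …, v_1) be the sentence obtained from S by prepending a placeholder at the left end of the i-th word (and reducing). Then S ∈ J_n if and only if S' ∈ J_n. -/

import Mathlib

/-- A word: a finite sequence of letters (`some a` for a positive integer `a`) and
placeholders (`none` for `ε`), written left to right (and read right to left). -/
abbrev Word : Type := List (Option ℕ+)

/-- A word is reduced if it has no two consecutive placeholders. -/
def WordReduced (w : Word) : Prop :=
  List.Chain' (fun a b => ¬(a = none ∧ b = none)) w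

/-- Reduce a word by fusing consecutive placeholders `εε` into a single `ε`. -/
def reduceWord : Word → Word
  | [] => []
  | [a] => [a]
  | none :: none :: rest => reduceWord (none :: rest)
  | a :: b :: rest => a :: reduceWord (b :: rest)

/-- The map `α_{m,·}` on words: replace each letter larger than `m` by the
placeholder `ε`, then reduce. -/
def alphaWord (m : ℕ) (w : Word) : Word :=
  reduceWord (w.map fun a =>
    match a with
    | none => none
    | some x => if (x : ℕ) ≤ m then some x else none)

/-- Auxiliary insertion, acting on the reversed (reading-order) word: insert the
letter `x` immediately before the first placeholder, or at the very end if there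
is no placeholder. -/
def insertAux (x : ℕ+) : List (Option ℕ+) → List (Option ℕ+)
  | [] => [some x]
  | none :: rest => some x :: none :: rest
  | a :: rest => a :: insertAux x rest

/-- Insert the letter `x` into a word: immediately to the right of the rightmost
placeholder if the word contains one, and at the left end otherwise. -/
def insertLetter (x : ℕ+) (w : Word) : Word :=
  (insertAux x w.reverse).reverse

/-- A sentence of `k` words. -/
abbrev Sentence (k : ℕ) := Fin k → Word

/-- Membership in `A_n`: all `k` words are reduced, each of the letters `1, …, n`
occurs exactly once in the sentence, and no other letter occurs. -/
def InA (k n : ℕ) (S : Sentence k) : Prop :=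
  (∀ i, WordReduced (S i)) ∧
    ∀ a : ℕ+, (∑ i : Fin k, (S i).count (some a)) = if (a : ℕ) ≤ n then 1 else 0

/-- The underlying map of `f_n^i` on sentences: insert the letter `n+1` into the
`i`-th word (to the right of the rightmost placeholder, or at the left end). -/
def finsert (k n : ℕ) (i : Fin k) (S : Sentence k) : Sentence k :=
  Function.update S i (insertLetter ⟨n + 1, Nat.succ_pos n⟩ (S i))

/-- The map `α_{m,·}` on sentences. -/
def alphaS (k m : ℕ) (S : Sentence k) : Sentence k := fun i => alphaWord m (S i)

/-- The sets `I_n`: `I_0 = ∅` and `I_{n+1} = ⋃_{i} image (f_n^i restricted to B_n)`,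
where `B_n = A_n - ⋃_{1 ≤ j ≤ n} α_{j,n}⁻¹(I_j)` (inlined below). -/
def Iset (k : ℕ) : ℕ → Set (Sentence k)
  | 0 => ∅
  | n + 1 =>
    {S | ∃ i : Fin k, ∃ T : Sentence k,
      ((InA k n T ∧ ∀ (j : ℕ) (_hj1 : 1 ≤ j) (_hj2 : j ≤ n), alphaS k j T ∉ Iset k j) ∧
        S = finsert k n i T)}
  termination_by n => n
  decreasing_by omega

/-- The set `B_n = A_n - J_n`. -/
def Bset (k n : ℕ) : Set (Sentence k) :=
  {S | InA k n S ∧ ∀ (j : ℕ) (_hj1 : 1 ≤ j) (_hj2 : j ≤ n), alphaS k j S ∉ Iset k j}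

/-- The set `J_n = ⋃_{1 ≤ j ≤ n} α_{j,n}⁻¹(I_j) ⊆ A_n`. -/
def Jset (k n : ℕ) : Set (Sentence k) :=
  {S | InA k n S ∧ ∃ j : ℕ, 1 ≤ j ∧ j ≤ n ∧ alphaS k j S ∈ Iset k j}

lemma reduceWord_cons (a : Option ℕ+) (l : Word) :
    reduceWord (a :: l) =
      if a = none ∧ l.head? = some none then reduceWord l else a :: reduceWord l := by
  match a, l with
  | a, [] => simp [reduceWord]
  | none, none :: rest => simp [reduceWord]
  | none, some b :: rest => simp [reduceWord]
  | some c, b :: rest => simp [reduceWord]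

lemma head?_reduceWord (l : Word) : (reduceWord l).head? = l.head? := by
  induction l using reduceWord.induct with
  | case1 => simp [reduceWord]
  | case2 => simp [reduceWord]
  | case3 rest ih => simpa [reduceWord] using ih
  | case4 a b rest h ih => simp [reduceWord, h]
lemma reduceWord_reduced (l : Word) : WordReduced (reduceWord l) := by
  induction l using reduceWord.induct with
  | case1 => simp [reduceWord, WordReduced, List.Chain']
  | case2 => simp [reduceWord, WordReduced, List.Chain']
  | case3 rest ih => simpa [reduceWord] using ih
  | case4 a b rest h ih =>
    simp only [reduceWord]
    rw [WordReduced, List.Chain', List.isChain_cons]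
    refine ⟨?_, ih⟩
    intro y hy
    rw [head?_reduceWord] at hy
    rw [List.head?_cons, Option.mem_def, Option.some.injEq] at hy
    subst hy
    simpa using h

lemma reduceWord_eq_self {l : Word} (h : WordReduced l) : reduceWord l = l := by
  induction l using reduceWord.induct with
  | case1 => rfl
  | case2 => simp [reduceWord]
  | case3 rest ih =>
    exfalso
    rw [WordReduced, List.Chain', List.isChain_cons_cons] at h
    exact h.1 ⟨rfl, rfl⟩
  | case4 a b rest hab ih =>
    simp only [reduceWord]
    rw [ih (List.IsChain.tail h)]

lemma reduceWord_idem (l : Word) : reduceWord (reduceWord l) = reduceWord l :=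
  reduceWord_eq_self (reduceWord_reduced l)

lemma count_reduceWord (l : Word) (a : ℕ+) :
    (reduceWord l).count (some a) = l.count (some a) := by
  induction l using reduceWord.induct with
  | case1 => rfl
  | case2 => simp [reduceWord]
  | case3 rest ih => simp_all [reduceWord, List.count_cons]
  | case4 b c rest h ih => simp_all [reduceWord, List.count_cons]

lemma reduceWord_cons_reduceWord (a : Option ℕ+) (l : Word) :
    reduceWord (a :: reduceWord l) = reduceWord (a :: l) := by
  rw [reduceWord_cons, reduceWord_cons a l, head?_reduceWord, reduceWord_idem]

lemma reduceWord_map {f : Option ℕ+ → Option ℕ+} (hf : f none = none) (l : Word) :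
    reduceWord ((reduceWord l).map f) = reduceWord (l.map f) := by
  induction l using reduceWord.induct with
  | case1 => rfl
  | case2 => simp [reduceWord]
  | case3 rest ih =>
    simp only [reduceWord]
    rw [ih]
    simp only [List.map_cons, hf, reduceWord]
  | case4 a b rest h ih =>
    simp only [reduceWord, List.map_cons]
    rw [← reduceWord_cons_reduceWord (f a), ih, reduceWord_cons_reduceWord]
    simp [reduceWord]
lemma insertAux_of_not_mem {x : ℕ+} {l : List (Option ℕ+)} (h : none ∉ l) :
    insertAux x l = l ++ [some x] := by
  induction l with
  | nil => rfl
  | cons a rest ih =>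
    match a with
    | none => exact absurd List.mem_cons_self h
    | some b =>
      simp only [insertAux, List.cons_append]
      rw [ih (fun hm => h (List.mem_cons_of_mem _ hm))]

lemma insertAux_append_of_mem {x : ℕ+} {l : List (Option ℕ+)} (h : none ∈ l)
    (t : List (Option ℕ+)) : insertAux x (l ++ t) = insertAux x l ++ t := by
  induction l with
  | nil => simp at h
  | cons a rest ih =>
    match a with
    | none => simp [insertAux]
    | some b =>
      simp only [List.cons_append, insertAux, List.cons_append]
      rw [ih (by simpa using h)]

lemma insertAux_not_mem_append_none {x : ℕ+} {l : List (Option ℕ+)} (h : none ∉ l) :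
    insertAux x (l ++ [none]) = l ++ [some x, none] := by
  induction l with
  | nil => rfl
  | cons a rest ih =>
    match a with
    | none => exact absurd List.mem_cons_self h
    | some b =>
      simp only [List.cons_append, insertAux]
      rw [ih (fun hm => h (List.mem_cons_of_mem _ hm))]

lemma insertLetter_of_not_mem {x : ℕ+} {w : Word} (h : none ∉ w) :
    insertLetter x w = some x :: w := by
  rw [insertLetter, insertAux_of_not_mem (by simpa using h)]
  simp

lemma insertLetter_none_cons (x : ℕ+) (w : Word) :
    insertLetter x (none :: w) = none :: insertLetter x w := by
  by_cases h : none ∈ w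
  · rw [insertLetter, insertLetter, List.reverse_cons,
      insertAux_append_of_mem (by simpa using h)]
    simp
  · rw [insertLetter, List.reverse_cons, insertAux_not_mem_append_none (by simpa using h),
      insertLetter_of_not_mem h]
    simp

lemma insertLetter_cons_some_of_mem {x b : ℕ+} {rest : Word} (h : none ∈ rest) :
    insertLetter x (some b :: rest) = some b :: insertLetter x rest := by
  rw [insertLetter, insertLetter, List.reverse_cons,
    insertAux_append_of_mem (by simpa using h)]
  simp

lemma head?_insertLetter {x : ℕ+} {w : Word} (h : w.head? ≠ some none) :
    (insertLetter x w).head? ≠ some none := by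
  match w with
  | [] => rw [insertLetter_of_not_mem (by simp)]; simp
  | none :: rest => simp at h
  | some b :: rest =>
    by_cases hm : none ∈ rest
    · rw [insertLetter_cons_some_of_mem hm]; simp
    · rw [insertLetter_of_not_mem (by simpa using hm)]; simp
/-- Prepend a placeholder and reduce. -/
def preW (w : Word) : Word := reduceWord (none :: w)

lemma preW_reduced (w : Word) : WordReduced (preW w) := reduceWord_reduced _

lemma preW_of_head_ne {w : Word} (hred : WordReduced w) (h : w.head? ≠ some none) :
    preW w = none :: w := by
  rw [preW, reduceWord_cons]
  simp [h, reduceWord_eq_self hred]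

lemma preW_of_head_eq {w : Word} (hred : WordReduced w) (h : w.head? = some none) :
    preW w = w := by
  rw [preW, reduceWord_cons]
  simp [h, reduceWord_eq_self hred]

lemma count_preW (w : Word) (a : ℕ+) : (preW w).count (some a) = w.count (some a) := by
  rw [preW, count_reduceWord, List.count_cons]
  simp

lemma alphaWord_reduced (m : ℕ) (w : Word) : WordReduced (alphaWord m w) :=
  reduceWord_reduced _

lemma alphaWord_preW (m : ℕ) (w : Word) : alphaWord m (preW w) = preW (alphaWord m w) := by
  rw [alphaWord, preW, reduceWord_map (f := fun a => match a with
      | none => none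
      | some x => if (x : ℕ) ≤ m then some x else none) rfl,
    List.map_cons, preW, ← reduceWord_cons_reduceWord, ← alphaWord]

lemma alphaS_update (k m : ℕ) (S : Sentence k) (i : Fin k) :
    alphaS k m (Function.update S i (preW (S i))) =
      Function.update (alphaS k m S) i (preW (alphaS k m S i)) := by
  funext j
  by_cases hj : j = i
  · subst hj
    simp [alphaS, Function.update_self, alphaWord_preW]
  · simp [alphaS, Function.update_of_ne hj]

lemma InA_update_preW {k n : ℕ} {S : Sentence k} {i : Fin k} (hred : WordReduced (S i)) :
    InA k n (Function.update S i (preW (S i))) ↔ InA k n S := by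
  have hcnt : ∀ a : ℕ+, (∑ j : Fin k, ((Function.update S i (preW (S i))) j).count (some a)) =
      ∑ j : Fin k, (S j).count (some a) := by
    intro a
    refine Finset.sum_congr rfl (fun j _ => ?_)
    by_cases hj : j = i
    · subst hj; rw [Function.update_self, count_preW]
    · rw [Function.update_of_ne hj]
  constructor
  · rintro ⟨h1, h2⟩
    refine ⟨fun j => ?_, fun a => by rw [← hcnt a]; exact h2 a⟩
    by_cases hj : j = i
    · subst hj; exact hred
    · have := h1 j; rwa [Function.update_of_ne hj] at this
  · rintro ⟨h1, h2⟩
    refine ⟨fun j => ?_, fun a => by rw [hcnt a]; exact h2 a⟩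
    by_cases hj : j = i
    · subst hj; rw [Function.update_self]; exact preW_reduced _
    · rw [Function.update_of_ne hj]; exact h1 j
lemma main (k : ℕ) (i : Fin k) :
    ∀ n (T : Sentence k), WordReduced (T i) →
      (Function.update T i (preW (T i)) ∈ Iset k n ↔ T ∈ Iset k n) := by
  intro n
  induction n using Nat.strong_induction_on with
  | _ n IH =>
    match n with
    | 0 => intro T _; simp [Iset]
    | m + 1 =>
      intro T hred
      by_cases hh : (T i).head? = some none
      · rw [preW_of_head_eq hred hh, Function.update_eq_self]
      · have hpre : preW (T i) = none :: T i := preW_of_head_ne hred hh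
        have hBkey : ∀ U : Sentence k, WordReduced (U i) →
            ((InA k m (Function.update U i (preW (U i))) ∧
              ∀ (j : ℕ) (_ : 1 ≤ j) (_ : j ≤ m),
                alphaS k j (Function.update U i (preW (U i))) ∉ Iset k j) ↔
             (InA k m U ∧ ∀ (j : ℕ) (_ : 1 ≤ j) (_ : j ≤ m),
                alphaS k j U ∉ Iset k j)) := by
          intro U hU
          have hb : ∀ j : ℕ, j ≤ m →
              (alphaS k j (Function.update U i (preW (U i))) ∈ Iset k j ↔
               alphaS k j U ∈ Iset k j) := by
            intro j hj
            rw [alphaS_update]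
            exact IH j (by omega) (alphaS k j U) (alphaWord_reduced j (U i))
          constructor
          · rintro ⟨h1, h2⟩
            exact ⟨(InA_update_preW hU).mp h1,
              fun j hj1 hj2 hc => h2 j hj1 hj2 ((hb j hj2).mpr hc)⟩
          · rintro ⟨h1, h2⟩
            exact ⟨(InA_update_preW hU).mpr h1,
              fun j hj1 hj2 hc => h2 j hj1 hj2 ((hb j hj2).mp hc)⟩
        constructor
        · -- forward direction
          intro hmem
          simp only [Iset, Set.mem_setOf_eq] at hmem ⊢
          obtain ⟨i', U', ⟨⟨hU'A, hU'B⟩, hEq⟩⟩ := hmem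
          rw [hpre] at hEq
          by_cases hi : i' = i
          · rw [hi] at hEq
            have hval : none :: T i = insertLetter ⟨m + 1, Nat.succ_pos m⟩ (U' i) := by
              have h0 := congrFun hEq i
              rw [Function.update_self] at h0
              rw [h0, finsert, Function.update_self]
            have hU'head : (U' i).head? = some none := by
              by_contra hc
              exact head?_insertLetter hc ((congrArg List.head? hval).symm.trans rfl)
            obtain ⟨R, hR⟩ : ∃ R, U' i = none :: R := by
              cases hU : U' i with
              | nil => rw [hU] at hU'head; simp at hU'head
              | cons a R =>
                rw [hU] at hU'head
                simp only [List.head?_cons, Option.some.injEq] at hU'head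
                exact ⟨R, by rw [hU'head]⟩
            rw [hR] at hval
            replace hval := List.cons.inj (hval.trans (insertLetter_none_cons _ R))
            have hTi : T i = insertLetter ⟨m + 1, Nat.succ_pos m⟩ R := hval.2
            have hU'red : WordReduced (none :: R) := by rw [← hR]; exact hU'A.1 i
            have hRred : WordReduced R := (List.isChain_cons.mp hU'red).2
            have hRhead : R.head? ≠ some none := by
              intro hc
              exact (List.isChain_cons.mp hU'red).1 none (Option.mem_def.mpr hc) ⟨rfl, rfl⟩
            have hUU' : Function.update (Function.update U' i R) i
                (preW ((Function.update U' i R) i)) = U' := by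
              rw [Function.update_self, preW_of_head_ne hRred hRhead,
                Function.update_idem, ← hR, Function.update_eq_self]
            refine ⟨i, Function.update U' i R,
              ⟨(hBkey (Function.update U' i R)
                  (by rw [Function.update_self]; exact hRred)).mp
                (by rw [hUU']; exact ⟨hU'A, hU'B⟩), ?_⟩⟩
            funext j
            by_cases hj : j = i
            · rw [hj, hTi]
              simp only [finsert, Function.update_self]
            · have h0 := congrFun hEq j
              rw [Function.update_of_ne hj] at h0
              rw [h0]
              simp only [finsert, Function.update_of_ne hj]
          · -- forward, i' ≠ i
            have hval : none :: T i = U' i := by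
              have h0 := congrFun hEq i
              rw [Function.update_self] at h0
              rw [h0, finsert, Function.update_of_ne (fun h => hi h.symm)]
            have hUU' : Function.update (Function.update U' i (T i)) i
                (preW ((Function.update U' i (T i)) i)) = U' := by
              rw [Function.update_self, hpre, Function.update_idem, hval,
                Function.update_eq_self]
            refine ⟨i', Function.update U' i (T i),
              ⟨(hBkey (Function.update U' i (T i))
                  (by rw [Function.update_self]; exact hred)).mp
                (by rw [hUU']; exact ⟨hU'A, hU'B⟩), ?_⟩⟩
            funext j
            by_cases hj : j = i
            · rw [hj]
              simp only [finsert, Function.update_of_ne (fun h => hi h.symm),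
                Function.update_self]
            · have h0 := congrFun hEq j
              rw [Function.update_of_ne hj] at h0
              rw [h0]
              by_cases hj' : j = i'
              · rw [hj']
                simp only [finsert, Function.update_self, Function.update_of_ne hi]
              · simp only [finsert, Function.update_of_ne hj', Function.update_of_ne hj]
        · -- backward direction
          intro hmem
          simp only [Iset, Set.mem_setOf_eq] at hmem ⊢
          obtain ⟨i', U, ⟨⟨hUA, hUB⟩, hEq⟩⟩ := hmem
          by_cases hi : i' = i
          · rw [hi] at hEq
            have hUred : WordReduced (U i) := hUA.1 i
            have hTi : T i = insertLetter ⟨m + 1, Nat.succ_pos m⟩ (U i) := by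
              rw [hEq]
              simp only [finsert, Function.update_self]
            have hUhead : (U i).head? ≠ some none := by
              intro hc
              obtain ⟨R, hR⟩ : ∃ R, U i = none :: R := by
                cases hU : U i with
                | nil => rw [hU] at hc; simp at hc
                | cons a R =>
                  rw [hU] at hc
                  simp only [List.head?_cons, Option.some.injEq] at hc
                  exact ⟨R, by rw [hc]⟩
              apply hh
              exact congrArg List.head? ((hTi.trans (congrArg (insertLetter _) hR)).trans
                (insertLetter_none_cons _ R))
            have hpreU : preW (U i) = none :: U i := preW_of_head_ne hUred hUhead
            refine ⟨i, Function.update U i (preW (U i)),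
              ⟨(hBkey U hUred).mpr ⟨hUA, hUB⟩, ?_⟩⟩
            funext j
            by_cases hj : j = i
            · rw [hj, Function.update_self, hpre, hTi]
              simp only [finsert, Function.update_self, hpreU, insertLetter_none_cons]
              exact (insertLetter_none_cons _ _).symm
            · simp only [Function.update_of_ne hj, hEq, finsert]
          · -- backward, i' ≠ i
            have hUred : WordReduced (U i) := hUA.1 i
            have hTiU : T i = U i := by
              rw [hEq]
              simp only [finsert, Function.update_of_ne (fun h => hi h.symm)]
            refine ⟨i', Function.update U i (preW (U i)),
              ⟨(hBkey U hUred).mpr ⟨hUA, hUB⟩, ?_⟩⟩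
            funext j
            by_cases hj : j = i
            · rw [hj]
              simp only [Function.update_self, finsert,
                Function.update_of_ne (fun h => hi h.symm), hTiU]
            · by_cases hj' : j = i'
              · rw [Function.update_of_ne hj, hEq, hj']
                simp only [finsert, Function.update_self, Function.update_of_ne hi]
              · simp only [Function.update_of_ne hj, hEq, finsert,
                  Function.update_of_ne hj']

theorem stmt_11 (k : ℕ) (hk : 1 ≤ k) (n : ℕ) (S : Sentence k)
    (hSA : InA k n S) (i : Fin k) :
    S ∈ Jset k n ↔ Function.update S i (reduceWord (none :: S i)) ∈ Jset k n := by
  have hred : WordReduced (S i) := hSA.1 i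
  have hpw : reduceWord (none :: S i) = preW (S i) := rfl
  have hS' : InA k n (Function.update S i (preW (S i))) := (InA_update_preW hred).mpr hSA
  rw [hpw]
  constructor
  · rintro ⟨-, j, hj1, hj2, hjm⟩
    refine ⟨hS', j, hj1, hj2, ?_⟩
    show alphaS k j (Function.update S i (preW (S i))) ∈ Iset k j
    rw [alphaS_update]
    exact (main k i j (alphaS k j S) (alphaWord_reduced j (S i))).mpr hjm
  · rintro ⟨-, j, hj1, hj2, hjm⟩
    refine ⟨hSA, j, hj1, hj2, ?_⟩
    rw [show alphaS k j (Function.update S i (preW (S i))) =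
        Function.update (alphaS k j S) i (preW (alphaS k j S i)) from alphaS_update k j S i]
      at hjm
    exact (main k i j (alphaS k j S) (alphaWord_reduced j (S i))).mp hjm
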